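/- Let d ≥ 1, β > 0 and let U = V + g satisfy assumptions (A0) and (A1). Then F is continuously differentiable on ℝ^{2d} and for every a ∈ ℝ^{2d} and every j ∈ {1,…,2d}: ∂F/∂a_j(a) = 2β ∫_ℝ U'(a_j − t) dν_a(t). -/

import Mathlib

open MeasureTheory Real Filter

noncomputable section

/-- Boltzmann weight of the single odd site given the `2d` neighbouring values `a`. -/
def siteWeight (β : ℝ) (d : ℕ) (U : ℝ → ℝ) (a : Fin (2*d) → ℝ) (t : ℝ) : ℝ :=
  Real.exp (-(2*β) * ∑ k, U (a k - t))

/-- Normalising constant `Z_a`. -/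
def Zsite (β : ℝ) (d : ℕ) (U : ℝ → ℝ) (a : Fin (2*d) → ℝ) : ℝ :=
  ∫ t : ℝ, siteWeight β d U a t

/-- Single-site measure `ν_a`. -/
def nuSite (β : ℝ) (d : ℕ) (U : ℝ → ℝ) (a : Fin (2*d) → ℝ) : Measure ℝ :=
  volume.withDensity fun t => ENNReal.ofReal (siteWeight β d U a t / Zsite β d U a)

/-- Coarse-grained potential `F(a) = -log Z_a`. -/
def Fcg (β : ℝ) (d : ℕ) (U : ℝ → ℝ) (a : Fin (2*d) → ℝ) : ℝ :=
  - Real.log (Zsite β d U a)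

/-- Covariance of two functions under a measure on `ℝ`. -/
def covM (ν : Measure ℝ) (f g : ℝ → ℝ) : ℝ :=
  (∫ t, f t * g t ∂ν) - (∫ t, f t ∂ν) * (∫ t, g t ∂ν)

/-- Variance of the identity function under a measure on `ℝ`. -/
def varId (ν : Measure ℝ) : ℝ := covM ν (fun t => t) (fun t => t)

/-- First partial derivative. -/
def pd {n : ℕ} (Φ : (Fin n → ℝ) → ℝ) (i : Fin n) (a : Fin n → ℝ) : ℝ :=
  fderiv ℝ Φ a (Pi.single i 1)

/-- Second partial derivative. -/
def pd2 {n : ℕ} (Φ : (Fin n → ℝ) → ℝ) (i j : Fin n) (a : Fin n → ℝ) : ℝ :=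
  fderiv ℝ (fun x => fderiv ℝ Φ x (Pi.single i 1)) a (Pi.single j 1)

namespace S8

variable {n : ℕ} {β A B K C₀ : ℝ} {U : ℝ → ℝ}

/-- generic weight -/
def W (β : ℝ) (U : ℝ → ℝ) (a : Fin n → ℝ) (t : ℝ) : ℝ :=
  Real.exp (-(2*β) * ∑ k, U (a k - t))

/-- candidate derivative of `a ↦ W β U a t` -/
def L (β : ℝ) (U : ℝ → ℝ) (a : Fin n → ℝ) (t : ℝ) : (Fin n → ℝ) →L[ℝ] ℝ :=
  (W β U a t * (-(2*β))) • ∑ k, deriv U (a k - t) • (ContinuousLinearMap.proj k :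
    (Fin n → ℝ) →L[ℝ] ℝ)

lemma W_pos (a : Fin n → ℝ) (t : ℝ) : 0 < W β U a t := Real.exp_pos _

lemma proj_norm_le (k : Fin n) :
    ‖(ContinuousLinearMap.proj k : (Fin n → ℝ) →L[ℝ] ℝ)‖ ≤ 1 :=
  ContinuousLinearMap.opNorm_le_bound _ zero_le_one fun x => by
    simpa using norm_le_pi_norm x k

lemma L_apply_single (a : Fin n → ℝ) (t : ℝ) (j : Fin n) :
    L β U a t (Pi.single j 1) = W β U a t * (-(2*β)) * deriv U (a j - t) := by
  simp only [L, ContinuousLinearMap.smul_apply, ContinuousLinearMap.sum_apply,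
    ContinuousLinearMap.smul_apply, ContinuousLinearMap.proj_apply, smul_eq_mul]
  rw [Finset.sum_eq_single j]
  · simp [mul_comm]
  · intro k _ hk; simp [Pi.single_eq_of_ne hk]
  · intro h; simp at h

lemma hasFDerivAt_W (hU : ContDiff ℝ 1 U) (a : Fin n → ℝ) (t : ℝ) :
    HasFDerivAt (fun x : Fin n → ℝ => W β U x t) (L β U a t) a := by
  have h1 : ∀ k : Fin n, HasFDerivAt (fun x : Fin n → ℝ => U (x k - t))
      (deriv U (a k - t) • (ContinuousLinearMap.proj k : (Fin n → ℝ) →L[ℝ] ℝ)) a := by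
    intro k
    have hpk : HasFDerivAt (fun x : Fin n → ℝ => x k - t)
        (ContinuousLinearMap.proj k : (Fin n → ℝ) →L[ℝ] ℝ) a :=
      ((ContinuousLinearMap.proj (R := ℝ) (φ := fun _ : Fin n => ℝ) k).hasFDerivAt (x := a)).sub_const t
    have hder : HasDerivAt U (deriv U (a k - t)) (a k - t) :=
      ((hU.differentiable one_ne_zero) (a k - t)).hasDerivAt
    exact hder.comp_hasFDerivAt a hpk
  have h2 : HasFDerivAt (fun x : Fin n → ℝ => ∑ k, U (x k - t))
      (∑ k, deriv U (a k - t) • (ContinuousLinearMap.proj k : (Fin n → ℝ) →L[ℝ] ℝ)) a :=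
    HasFDerivAt.fun_sum fun k _ => h1 k
  have h3 := ((h2.const_mul (-(2*β))).exp)
  have h4 : L β U a t = Real.exp (-(2*β) * ∑ k, U (a k - t)) •
      ((-(2*β)) • ∑ k, deriv U (a k - t) • (ContinuousLinearMap.proj k :
        (Fin n → ℝ) →L[ℝ] ℝ)) := by
    rw [L, W, smul_smul]
  rw [h4]; exact h3

lemma continuous_W_t (hUc : Continuous U) (a : Fin n → ℝ) :
    Continuous fun t => W β U a t := by
  apply Real.continuous_exp.comp
  exact continuous_const.mul (continuous_finset_sum _ fun k _ =>
    hUc.comp (continuous_const.sub continuous_id))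

lemma continuous_L_t (hU : ContDiff ℝ 1 U) (a : Fin n → ℝ) :
    Continuous fun t => L β U a t := by
  have hdc : Continuous (deriv U) := hU.continuous_deriv le_rfl
  apply Continuous.fun_smul
  · exact (continuous_W_t hU.continuous a).mul continuous_const
  · exact continuous_finset_sum _ fun k _ => Continuous.fun_smul
      (hdc.comp (continuous_const.sub continuous_id)) continuous_const

lemma continuous_L_a (hU : ContDiff ℝ 1 U) (t : ℝ) :
    Continuous fun a : Fin n → ℝ => L β U a t := by
  have hdc : Continuous (deriv U) := hU.continuous_deriv le_rfl
  have hWc : Continuous fun a : Fin n → ℝ => W β U a t := by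
    apply Real.continuous_exp.comp
    exact continuous_const.mul (continuous_finset_sum _ fun k _ =>
      hU.continuous.comp ((continuous_apply k).sub continuous_const))
  apply Continuous.fun_smul
  · exact hWc.mul continuous_const
  · exact continuous_finset_sum _ fun k _ => Continuous.fun_smul
      (hdc.comp ((continuous_apply k).sub continuous_const)) continuous_const

section bounds

/-- The Gaussian-type dominating functions are integrable. -/
lemma integrable_dom {c : ℝ} (hc : 0 < c) (c1 c2 : ℝ) :
    Integrable (fun t : ℝ => c1 * Real.exp (-c * t^2) + c2 * (|t| * Real.exp (-c * t^2))) := by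
  have h1 : Integrable (fun t : ℝ => Real.exp (-c * t^2)) := integrable_exp_neg_mul_sq hc
  have h2 : Integrable (fun t : ℝ => |t| * Real.exp (-c * t^2)) := by
    have := (integrable_rpow_mul_exp_neg_mul_sq hc (s := 1) (by norm_num)).abs
    refine this.congr ?_
    filter_upwards with t
    rw [abs_mul, Real.rpow_one, abs_of_nonneg (Real.exp_pos _).le]
  exact (h1.const_mul c1).add (h2.const_mul c2)

/-- pointwise Gaussian bound on W, uniform over `|x k| ≤ R`. -/
lemma W_le (hβ : 0 < β) (hA : 0 < A) (hgrow : ∀ η, A * η^2 - B ≤ U η) (hn : 0 < n) {R : ℝ} {x : Fin n → ℝ} (hx : ∀ k, |x k| ≤ R) (t : ℝ) :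
    W β U x t ≤ Real.exp (2*β*(n*(B + A*R^2))) * Real.exp (-(β*A*n) * t^2) := by
  have hS : (n : ℝ) * (A * t^2/2 - A*R^2 - B) ≤ ∑ k, U (x k - t) := by
    have : ∀ k : Fin n, A * t^2/2 - A*R^2 - B ≤ U (x k - t) := by
      intro k
      have h1 := hgrow (x k - t)
      have h2 : (x k)^2 ≤ R^2 := by
        have := hx k
        nlinarith [abs_nonneg (x k), sq_abs (x k)]
      nlinarith [mul_nonneg hA.le (sq_nonneg (2*(x k) - t)), mul_le_mul_of_nonneg_left h2 hA.le]
    calc (n : ℝ) * (A * t^2/2 - A*R^2 - B) = ∑ _k : Fin n, (A * t^2/2 - A*R^2 - B) := by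
          rw [Finset.sum_const, Finset.card_univ, Fintype.card_fin, nsmul_eq_mul]
      _ ≤ ∑ k, U (x k - t) := Finset.sum_le_sum fun k _ => this k
  rw [W, ← Real.exp_add]
  apply Real.exp_le_exp.mpr
  have := mul_le_mul_of_nonneg_left hS (le_of_lt hβ)
  nlinarith [this]

/-- dominating function -/
def bnd (β A B K C₀ : ℝ) (n : ℕ) (R : ℝ) (t : ℝ) : ℝ :=
  (2*β * Real.exp (2*β*(n*(B + A*R^2))) * n * (K + C₀*R)) * Real.exp (-(β*A*n) * t^2)
  + (2*β * Real.exp (2*β*(n*(B + A*R^2))) * n * C₀) * (|t| * Real.exp (-(β*A*n) * t^2))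

lemma integrable_bnd (hβ : 0 < β) (hA : 0 < A) (hn : 0 < n) (R : ℝ) :
    Integrable (fun t => bnd β A B K C₀ n R t) := by
  have hc : 0 < β*A*(n:ℝ) := by positivity
  exact integrable_dom hc _ _

lemma norm_L_le (hβ : 0 < β) (hA : 0 < A) (hgrow : ∀ η, A * η^2 - B ≤ U η) (hn : 0 < n)
    (hK : 0 ≤ K) (hC0 : 0 ≤ C₀) (hU' : ∀ s, |deriv U s| ≤ K + C₀ * |s|)
    {R : ℝ} (hR : 0 ≤ R) {x : Fin n → ℝ} (hx : ∀ k, |x k| ≤ R) (t : ℝ) :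
    ‖L β U x t‖ ≤ bnd β A B K C₀ n R t := by
  set M := Real.exp (2*β*(n*(B + A*R^2))) with hM
  set E := Real.exp (-(β*A*n) * t^2) with hE
  have hEpos : 0 < E := Real.exp_pos _
  have hMpos : 0 < M := Real.exp_pos _
  have hKR : 0 ≤ K + C₀*R + C₀*|t| := by
    have := abs_nonneg t
    positivity
  have hSle : ‖∑ k, deriv U (x k - t) • (ContinuousLinearMap.proj k :
      (Fin n → ℝ) →L[ℝ] ℝ)‖ ≤ n * (K + C₀*R + C₀*|t|) := by
    calc ‖∑ k, deriv U (x k - t) • (ContinuousLinearMap.proj k :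
        (Fin n → ℝ) →L[ℝ] ℝ)‖ ≤ ∑ k : Fin n, ‖deriv U (x k - t) • (ContinuousLinearMap.proj k :
        (Fin n → ℝ) →L[ℝ] ℝ)‖ := norm_sum_le _ _
      _ ≤ ∑ _k : Fin n, (K + C₀*R + C₀*|t|) := by
          refine Finset.sum_le_sum fun k _ => ?_
          rw [norm_smul (deriv U (x k - t)) (ContinuousLinearMap.proj (R := ℝ)
            (φ := fun _ : Fin n => ℝ) k)]
          have h1 : ‖deriv U (x k - t)‖ ≤ K + C₀*R + C₀*|t| := by
            refine le_trans (hU' _) ?_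
            have h2 : |x k - t| ≤ R + |t| := (abs_sub (x k) t).trans (by
              have := hx k; linarith)
            nlinarith [mul_le_mul_of_nonneg_left h2 hC0]
          calc ‖deriv U (x k - t)‖ * ‖(ContinuousLinearMap.proj k :
              (Fin n → ℝ) →L[ℝ] ℝ)‖ ≤ (K + C₀*R + C₀*|t|) * 1 :=
                mul_le_mul h1 (proj_norm_le k) (norm_nonneg _) hKR
            _ = K + C₀*R + C₀*|t| := mul_one _
      _ = n * (K + C₀*R + C₀*|t|) := by
          rw [Finset.sum_const, Finset.card_univ, Fintype.card_fin, nsmul_eq_mul]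
  have hWle : W β U x t ≤ M * E := W_le hβ hA hgrow hn hx t
  have e1 : ‖L β U x t‖ ≤ (W β U x t * (2*β)) * (n * (K + C₀*R + C₀*|t|)) := by
    rw [L, norm_smul (W β U x t * (-(2*β))) (∑ k, deriv U (x k - t) •
      (ContinuousLinearMap.proj k : (Fin n → ℝ) →L[ℝ] ℝ))]
    have habs : ‖W β U x t * (-(2*β))‖ = W β U x t * (2*β) := by
      rw [Real.norm_eq_abs, abs_mul, abs_of_pos (W_pos _ _), abs_neg,
        abs_of_pos (by positivity)]
    rw [habs]
    exact mul_le_mul_of_nonneg_left hSle (mul_nonneg (W_pos x t).le (by positivity))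
  have e2 : (W β U x t * (2*β)) * (n * (K + C₀*R + C₀*|t|)) ≤
      ((M * E) * (2*β)) * (n * (K + C₀*R + C₀*|t|)) := by
    have : W β U x t * (2*β) ≤ (M * E) * (2*β) :=
      mul_le_mul_of_nonneg_right hWle (by positivity)
    exact mul_le_mul_of_nonneg_right this (mul_nonneg (Nat.cast_nonneg n) hKR)
  calc ‖L β U x t‖ ≤ ((M * E) * (2*β)) * (n * (K + C₀*R + C₀*|t|)) := e1.trans e2
    _ = bnd β A B K C₀ n R t := by rw [bnd]; ring

lemma ball_abs_le {a x : Fin n → ℝ} (hx : x ∈ Metric.ball a 1) (k : Fin n) :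
    |x k| ≤ ‖a‖ + 1 := by
  have h1 : ‖x k‖ ≤ ‖x‖ := norm_le_pi_norm x k
  have h2 : ‖x‖ ≤ ‖x - a‖ + ‖a‖ := by
    simpa using norm_add_le (x - a) a
  have h3 : ‖x - a‖ < 1 := by
    rw [← dist_eq_norm]; exact Metric.mem_ball.mp hx
  simp only [Real.norm_eq_abs] at h1
  linarith

lemma integrable_W (hβ : 0 < β) (hA : 0 < A) (hgrow : ∀ η, A * η^2 - B ≤ U η) (hn : 0 < n)
    (hUc : Continuous U) (a : Fin n → ℝ) :
    Integrable (fun t => W β U a t) := by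
  set R : ℝ := ‖a‖ + 1 with hR
  have hx : ∀ k, |a k| ≤ R := fun k => by
    have := norm_le_pi_norm a k
    simp only [Real.norm_eq_abs] at this; simp only [hR]; linarith
  have hc : 0 < β*A*n := by positivity
  refine Integrable.mono' ((integrable_exp_neg_mul_sq hc).const_mul
    (Real.exp (2*β*(n*(B + A*R^2))))) ((continuous_W_t hUc a).aestronglyMeasurable) ?_
  filter_upwards with t
  rw [Real.norm_eq_abs, abs_of_pos (W_pos a t)]
  exact W_le hβ hA hgrow hn hx t

lemma Z_pos (hβ : 0 < β) (hA : 0 < A) (hgrow : ∀ η, A * η^2 - B ≤ U η) (hn : 0 < n)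
    (hUc : Continuous U) (a : Fin n → ℝ) :
    0 < ∫ t, W β U a t := by
  rw [integral_pos_iff_support_of_nonneg (fun t => (W_pos (β := β) (U := U) a t).le)
    (integrable_W hβ hA hgrow hn hUc a)]
  have hsupp : Function.support (fun t => W β U a t) = Set.univ :=
    Set.eq_univ_of_forall fun t => (W_pos a t).ne'
  rw [hsupp]
  simp

lemma integrable_L (hβ : 0 < β) (hA : 0 < A) (hgrow : ∀ η, A * η^2 - B ≤ U η) (hn : 0 < n)
    (hK : 0 ≤ K) (hC0 : 0 ≤ C₀) (hU : ContDiff ℝ 1 U)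
    (hU' : ∀ s, |deriv U s| ≤ K + C₀ * |s|) (a : Fin n → ℝ) :
    Integrable (fun t => L β U a t) := by
  set R : ℝ := ‖a‖ + 1 with hR
  have hRnn : 0 ≤ R := by positivity
  have hx : ∀ k, |a k| ≤ R := fun k => by
    have := norm_le_pi_norm a k
    simp only [Real.norm_eq_abs] at this; simp only [hR]; linarith
  refine Integrable.mono' (integrable_bnd (B := B) (K := K) (C₀ := C₀) hβ hA hn R)
    ((continuous_L_t hU a).aestronglyMeasurable) ?_
  filter_upwards with t
  exact norm_L_le hβ hA hgrow hn hK hC0 hU' hRnn hx t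

lemma hasFDerivAt_Z (hβ : 0 < β) (hA : 0 < A) (hgrow : ∀ η, A * η^2 - B ≤ U η) (hn : 0 < n)
    (hK : 0 ≤ K) (hC0 : 0 ≤ C₀) (hU : ContDiff ℝ 1 U)
    (hU' : ∀ s, |deriv U s| ≤ K + C₀ * |s|) (a : Fin n → ℝ) :
    HasFDerivAt (fun x : Fin n → ℝ => ∫ t, W β U x t) (∫ t, L β U a t) a := by
  set R : ℝ := ‖a‖ + 1 with hR
  have hRnn : 0 ≤ R := by positivity
  refine hasFDerivAt_integral_of_dominated_of_fderiv_le (Metric.ball_mem_nhds a one_pos)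
    (Filter.Eventually.of_forall fun x => (continuous_W_t hU.continuous x).aestronglyMeasurable)
    (integrable_W hβ hA hgrow hn hU.continuous a)
    ((continuous_L_t hU a).aestronglyMeasurable) ?_ (integrable_bnd (B := B) (K := K) (C₀ := C₀) hβ hA hn R) ?_
  · filter_upwards with t x hx
    exact norm_L_le hβ hA hgrow hn hK hC0 hU' hRnn (fun k => ball_abs_le hx k) t
  · filter_upwards with t x _
    exact hasFDerivAt_W hU x t

lemma continuous_intL (hβ : 0 < β) (hA : 0 < A) (hgrow : ∀ η, A * η^2 - B ≤ U η) (hn : 0 < n)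
    (hK : 0 ≤ K) (hC0 : 0 ≤ C₀) (hU : ContDiff ℝ 1 U)
    (hU' : ∀ s, |deriv U s| ≤ K + C₀ * |s|) :
    Continuous fun a : Fin n → ℝ => ∫ t, L β U a t := by
  rw [continuous_iff_continuousAt]
  intro a
  set R : ℝ := ‖a‖ + 1 with hR
  have hRnn : 0 ≤ R := by positivity
  refine continuousAt_of_dominated
    (Filter.Eventually.of_forall fun x => (continuous_L_t hU x).aestronglyMeasurable)
    ?_ (integrable_bnd (B := B) (K := K) (C₀ := C₀) hβ hA hn R) ?_
  · filter_upwards [Metric.ball_mem_nhds a one_pos] with x hx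
    filter_upwards with t
    exact norm_L_le hβ hA hgrow hn hK hC0 hU' hRnn (fun k => ball_abs_le hx k) t
  · filter_upwards with t
    exact (continuous_L_a hU t).continuousAt

lemma main (hn : 0 < n) (hβ : 0 < β) (hA : 0 < A) (hK : 0 ≤ K) (hC0 : 0 ≤ C₀)
    (hU : ContDiff ℝ 1 U) (hgrow : ∀ η, A * η^2 - B ≤ U η)
    (hU' : ∀ s, |deriv U s| ≤ K + C₀ * |s|) :
    ContDiff ℝ 1 (fun a : Fin n → ℝ => -Real.log (∫ t, W β U a t)) ∧
    ∀ (a : Fin n → ℝ) (j : Fin n),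
      fderiv ℝ (fun a : Fin n → ℝ => -Real.log (∫ t, W β U a t)) a (Pi.single j 1)
        = 2*β * ((∫ t, W β U a t)⁻¹ * ∫ t, W β U a t * deriv U (a j - t)) := by
  have hZpos : ∀ a : Fin n → ℝ, 0 < ∫ t, W β U a t := fun a =>
    Z_pos hβ hA hgrow hn hU.continuous a
  have hder : ∀ a : Fin n → ℝ, HasFDerivAt (fun a : Fin n → ℝ => -Real.log (∫ t, W β U a t))
      (-(((∫ t, W β U a t)⁻¹ : ℝ) • ∫ t, L β U a t)) a := fun a =>
    ((hasFDerivAt_Z hβ hA hgrow hn hK hC0 hU hU' a).log (hZpos a).ne').neg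
  constructor
  · rw [contDiff_one_iff_fderiv]
    refine ⟨fun a => (hder a).differentiableAt, ?_⟩
    have heq : (fderiv ℝ fun a : Fin n → ℝ => -Real.log (∫ t, W β U a t)) =
        fun a => -(((∫ t, W β U a t)⁻¹ : ℝ) • ∫ t, L β U a t) :=
      funext fun a => (hder a).fderiv
    rw [heq]
    have hZc : Continuous fun a : Fin n → ℝ => ∫ t, W β U a t := by
      rw [continuous_iff_continuousAt]
      exact fun a => (hasFDerivAt_Z hβ hA hgrow hn hK hC0 hU hU' a).continuousAt
    exact ((hZc.inv₀ (fun a => (hZpos a).ne')).smul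
      (continuous_intL hβ hA hgrow hn hK hC0 hU hU')).neg
  · intro a j
    rw [(hder a).fderiv]
    simp only [ContinuousLinearMap.neg_apply, ContinuousLinearMap.smul_apply, smul_eq_mul]
    rw [ContinuousLinearMap.integral_apply (integrable_L hβ hA hgrow hn hK hC0 hU hU' a)]
    have h2 : (∫ t, L β U a t (Pi.single j 1)) =
        (-(2*β)) * ∫ t, W β U a t * deriv U (a j - t) := by
      rw [← MeasureTheory.integral_const_mul]
      congr 1; funext t
      rw [L_apply_single]; ring
    rw [h2]; ring

end bounds

end S8

/-- first partial derivatives of `F`. -/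
theorem statement8
    {d : ℕ} {β A B C₀ C₁ C₂ : ℝ} {U V g : ℝ → ℝ}
    (hd : 1 ≤ d) (hβ : 0 < β)
    -- (A0)
    (hUcont : Continuous U) (hA : 0 < A) (hA0 : ∀ η : ℝ, A * η ^ 2 - B ≤ U η)
    -- (A1)
    (hsum : ∀ s, U s = V s + g s)
    (hV : ContDiff ℝ 2 V) (hg : ContDiff ℝ 2 g)
    (hC₁ : 0 < C₁) (hC₁₂ : C₁ < C₂) (hC₂₀ : C₂ < C₀)
    (hV'' : ∀ s, C₁ ≤ deriv (deriv V) s ∧ deriv (deriv V) s ≤ C₂)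
    (hg'' : ∀ s, -C₀ ≤ deriv (deriv g) s ∧ deriv (deriv g) s ≤ 0) :
    ContDiff ℝ 1 (Fcg β d U) ∧
    ∀ (a : Fin (2*d) → ℝ) (j : Fin (2*d)),
      pd (Fcg β d U) j a = 2*β * ∫ t, deriv U (a j - t) ∂(nuSite β d U a) := by
  have hn : 0 < 2*d := by omega
  have hC0pos : 0 < C₀ := lt_trans (lt_trans hC₁ hC₁₂) hC₂₀
  have hUeq : U = fun s => V s + g s := funext hsum
  have hU2 : ContDiff ℝ 2 U := by rw [hUeq]; exact hV.add hg
  have hU1 : ContDiff ℝ 1 U := hU2.of_le (by norm_num)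
  -- C¹ regularity of the derivatives of V and g
  have hV1 : ContDiff ℝ 1 (deriv V) :=
    ((contDiff_succ_iff_deriv.mp (show ContDiff ℝ (1+1) V by norm_num [hV])).2).2
  have hg1 : ContDiff ℝ 1 (deriv g) :=
    ((contDiff_succ_iff_deriv.mp (show ContDiff ℝ (1+1) g by norm_num [hg])).2).2
  have hVd : Differentiable ℝ V := hV.differentiable (by norm_num)
  have hgd : Differentiable ℝ g := hg.differentiable (by norm_num)
  have hUd : deriv U = fun s => deriv V s + deriv g s := by
    funext s; rw [hUeq]; exact deriv_add (hVd s) (hgd s)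
  have hdd : ∀ s, DifferentiableAt ℝ (deriv U) s := by
    rw [hUd]
    exact fun s => ((hV1.differentiable one_ne_zero) s).add ((hg1.differentiable one_ne_zero) s)
  have hU2d : ∀ s, deriv (deriv U) s = deriv (deriv V) s + deriv (deriv g) s := by
    intro s; rw [hUd]
    exact deriv_fun_add ((hV1.differentiable one_ne_zero) s) ((hg1.differentiable one_ne_zero) s)
  have habs2 : ∀ s, |deriv (deriv U) s| ≤ C₀ := by
    intro s; rw [hU2d s]
    obtain ⟨h1, h2⟩ := hV'' s
    obtain ⟨h3, h4⟩ := hg'' s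
    rw [abs_le]; constructor <;> linarith
  set K : ℝ := |deriv U 0| with hKdef
  have hK : 0 ≤ K := abs_nonneg _
  have hU' : ∀ s, |deriv U s| ≤ K + C₀ * |s| := by
    intro s
    have h := Convex.norm_image_sub_le_of_norm_deriv_le (f := deriv U)
      (fun x _ => hdd x) (fun x _ => by simpa [Real.norm_eq_abs] using habs2 x)
      convex_univ (Set.mem_univ (0:ℝ)) (Set.mem_univ s)
    rw [Real.norm_eq_abs, Real.norm_eq_abs, sub_zero] at h
    have h2 := abs_sub_abs_le_abs_sub (deriv U s) (deriv U 0)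
    linarith
  -- apply the generic result with n = 2*d
  obtain ⟨hmain1, hmain2⟩ := S8.main (n := 2*d) (B := B) hn hβ hA hK hC0pos.le hU1 hA0 hU'
  have hFeq : Fcg β d U = fun a : Fin (2*d) → ℝ => -Real.log (∫ t, S8.W β U a t) := rfl
  constructor
  · rw [hFeq]; exact hmain1
  · intro a j
    have hZpos : 0 < Zsite β d U a :=
      S8.Z_pos hβ hA hA0 hn hU1.continuous a
    -- rewrite the nuSite integral
    have hν : (∫ t, deriv U (a j - t) ∂(nuSite β d U a)) =
        (∫ t, S8.W β U a t)⁻¹ * ∫ t, S8.W β U a t * deriv U (a j - t) := by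
      have hZeq : (∫ t, S8.W β U a t) = Zsite β d U a := rfl
      rw [hZeq]
      have hmeas : Measurable fun t => (S8.W β U a t / Zsite β d U a).toNNReal :=
        (((S8.continuous_W_t hU1.continuous a).div_const _).measurable).real_toNNReal
      have hnu : nuSite β d U a =
          volume.withDensity fun t => ((S8.W β U a t / Zsite β d U a).toNNReal : ENNReal) := rfl
      rw [hnu, integral_withDensity_eq_integral_smul hmeas]
      rw [← MeasureTheory.integral_const_mul]
      congr 1; funext t
      rw [NNReal.smul_def, Real.coe_toNNReal _
        (div_nonneg (S8.W_pos (β := β) (U := U) a t).le hZpos.le), smul_eq_mul]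
      ring
    have hpd : pd (Fcg β d U) j a =
        fderiv ℝ (fun a : Fin (2*d) → ℝ => -Real.log (∫ t, S8.W β U a t)) a (Pi.single j 1) := by
      rw [pd, hFeq]
    rw [hpd, hmain2 a j, hν]

end
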